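/- For n×n Hermitian complex matrices X₁, X₂, n×n positive semidefinite complex matrices S₁, S₂, and any positive real numbers a and b, one has a·Tr[X₁S₁X₁S₂] + b·Tr[X₂S₁X₂S₂] ≥ 2√(ab)·|Tr[X₁S₁X₂S₂]|, where the two traces on the left-hand side are nonnegative real numbers and |·| denotes the complex modulus. -/

import Mathlib

open Matrix ComplexOrder

noncomputable def vecOf {n : ℕ} (M : Matrix (Fin n) (Fin n) ℂ) :
    EuclideanSpace ℂ (Fin n × Fin n) := WithLp.toLp 2 (fun p : Fin n × Fin n => M p.1 p.2)

lemma tr_inner {n : ℕ} (M N : Matrix (Fin n) (Fin n) ℂ) :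
    (Mᴴ * N).trace = inner (𝕜 := ℂ) (vecOf M) (vecOf N) := by
  rw [PiLp.inner_apply]
  simp only [RCLike.inner_apply, vecOf, Matrix.trace, Matrix.diag, Matrix.mul_apply,
    Matrix.conjTranspose_apply, Fintype.sum_prod_type, PiLp.toLp_apply]
  rw [Finset.sum_comm]
  simp [RCLike.star_def, mul_comm]

lemma tr_key {n : ℕ} (A B X Y : Matrix (Fin n) (Fin n) ℂ)
    (hA : A.IsHermitian) (hB : B.IsHermitian) (hX : X.IsHermitian) :
    (X * (A * A) * Y * (B * B)).trace = ((A * X * B)ᴴ * (A * Y * B)).trace := by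
  have h1 : (A * X * B)ᴴ = B * X * A := by
    simp [Matrix.conjTranspose_mul, hA.eq, hB.eq, hX.eq, Matrix.mul_assoc]
  have h2 : (B * X * A) * (A * Y * B) = B * (X * (A * A) * Y * B) := by
    simp only [Matrix.mul_assoc]
  rw [h1, h2, Matrix.trace_mul_comm B (X * (A * A) * Y * B)]
  simp only [Matrix.mul_assoc]

theorem trace_weighted_hermitian_ineq {n : ℕ} (X₁ X₂ S₁ S₂ : Matrix (Fin n) (Fin n) ℂ)
    (hX₁ : X₁.IsHermitian) (hX₂ : X₂.IsHermitian)
    (hS₁ : S₁.PosSemidef) (hS₂ : S₂.PosSemidef)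
    (a b : ℝ) (ha : 0 < a) (hb : 0 < b) :
    ((X₁ * S₁ * X₁ * S₂).trace).im = 0 ∧ 0 ≤ ((X₁ * S₁ * X₁ * S₂).trace).re ∧
    ((X₂ * S₁ * X₂ * S₂).trace).im = 0 ∧ 0 ≤ ((X₂ * S₁ * X₂ * S₂).trace).re ∧
    a * ((X₁ * S₁ * X₁ * S₂).trace).re + b * ((X₂ * S₁ * X₂ * S₂).trace).re ≥
      2 * Real.sqrt (a * b) * ‖(X₁ * S₁ * X₂ * S₂).trace‖ := by
  set A := (open scoped MatrixOrder in CFC.sqrt S₁) with hAdef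
  set B := (open scoped MatrixOrder in CFC.sqrt S₂) with hBdef
  have hA : A.IsHermitian := by open scoped MatrixOrder in exact (CFC.sqrt_nonneg S₁).posSemidef.isHermitian
  have hB : B.IsHermitian := by open scoped MatrixOrder in exact (CFC.sqrt_nonneg S₂).posSemidef.isHermitian
  have hS1 : S₁ = A * A := by open scoped MatrixOrder in exact (CFC.sqrt_mul_sqrt_self S₁ hS₁.nonneg).symm
  have hS2 : S₂ = B * B := by open scoped MatrixOrder in exact (CFC.sqrt_mul_sqrt_self S₂ hS₂.nonneg).symm
  have key : ∀ (X Y : Matrix (Fin n) (Fin n) ℂ), X.IsHermitian →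
      (X * S₁ * Y * S₂).trace = inner (𝕜 := ℂ) (vecOf (A * X * B)) (vecOf (A * Y * B)) := by
    intro X Y hX
    rw [hS1, hS2, Matrix.mul_assoc X, ← Matrix.mul_assoc X, tr_key A B X Y hA hB hX, tr_inner]
  set v₁ := vecOf (A * X₁ * B)
  set v₂ := vecOf (A * X₂ * B)
  have k11 : (X₁ * S₁ * X₁ * S₂).trace = inner (𝕜 := ℂ) v₁ v₁ := key X₁ X₁ hX₁
  have k22 : (X₂ * S₁ * X₂ * S₂).trace = inner (𝕜 := ℂ) v₂ v₂ := key X₂ X₂ hX₂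
  have k12 : (X₁ * S₁ * X₂ * S₂).trace = inner (𝕜 := ℂ) v₁ v₂ := key X₁ X₂ hX₁
  have r1 : (inner (𝕜 := ℂ) v₁ v₁).re = ‖v₁‖ ^ 2 := by
    simpa using inner_self_eq_norm_sq (𝕜 := ℂ) v₁
  have r2 : (inner (𝕜 := ℂ) v₂ v₂).re = ‖v₂‖ ^ 2 := by
    simpa using inner_self_eq_norm_sq (𝕜 := ℂ) v₂
  have cs : ‖inner (𝕜 := ℂ) v₁ v₂‖ ≤ ‖v₁‖ * ‖v₂‖ := by
    exact norm_inner_le_norm v₁ v₂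
  rw [k11, k22, k12]
  refine ⟨by simpa using inner_self_im (𝕜 := ℂ) v₁,
    by simpa using inner_self_nonneg (𝕜 := ℂ) (x := v₁),
    by simpa using inner_self_im (𝕜 := ℂ) v₂,
    by simpa using inner_self_nonneg (𝕜 := ℂ) (x := v₂), ?_⟩
  rw [r1, r2]
  have hab : Real.sqrt (a * b) = Real.sqrt a * Real.sqrt b := Real.sqrt_mul ha.le b
  have hsa : Real.sqrt a ^ 2 = a := Real.sq_sqrt ha.le
  have hsb : Real.sqrt b ^ 2 = b := Real.sq_sqrt hb.le
  rw [hab]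
  nlinarith [sq_nonneg (Real.sqrt a * ‖v₁‖ - Real.sqrt b * ‖v₂‖),
    mul_le_mul_of_nonneg_left cs (by positivity : (0:ℝ) ≤ 2 * (Real.sqrt a * Real.sqrt b)),
    Real.sqrt_nonneg a, Real.sqrt_nonneg b, norm_nonneg v₁, norm_nonneg v₂]
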